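/- arXiv:2408.04982 — 5 statements merged into one kernel-verified Lean document; each statement's English description precedes it below -/
import Mathlib

section
/- Let U be the Lucas sequence with integer parameters A, B satisfying A ≥ 1 and A² > 4B > 0. Let α = (A + √(A²−4B))/2. Then for every n ≥ 2 one has U_n ≥ α^{n−1}. -/
theorem lucas_real_Bpos_growth (A B : ℤ) (U : ℕ → ℤ)
    (hU0 : U 0 = 0) (hU1 : U 1 = 1)
    (hrec : ∀ n : ℕ, U (n + 2) = A * U (n + 1) - B * U n)
    (hA : 1 ≤ A) (hD : 4 * B < A ^ 2) (hB : 0 < B) :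
    ∀ n : ℕ, 2 ≤ n →
      (((A : ℝ) + Real.sqrt ((A : ℝ) ^ 2 - 4 * B)) / 2) ^ (n - 1) ≤ (U n : ℝ) := by
  set s := Real.sqrt ((A : ℝ) ^ 2 - 4 * B) with hs
  set α := ((A:ℝ) + s)/2 with hα
  have hA' : (1:ℝ) ≤ (A:ℝ) := by exact_mod_cast hA
  have hB' : (0:ℝ) < (B:ℝ) := by exact_mod_cast hB
  have hD' : (0:ℝ) < (A:ℝ)^2 - 4*B := by
    have : (4*B : ℝ) < (A:ℝ)^2 := by exact_mod_cast hD
    linarith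
  have hs0 : 0 ≤ s := Real.sqrt_nonneg _
  have hs2 : s^2 = (A:ℝ)^2 - 4*B := Real.sq_sqrt hD'.le
  have hαpos : 0 < α := by rw [hα]; linarith
  have hαsq : α * α = A * α - B := by rw [hα]; nlinarith [hs2]
  have hsltA : s < (A:ℝ) := by nlinarith [hs2, hs0]
  have hαA : α ≤ (A:ℝ) := by rw [hα]; linarith
  have key : ∀ n, α * (U n : ℝ) ≤ (U (n+1) : ℝ) ∧ (0:ℝ) ≤ (U n : ℝ) := by
    intro n
    induction n with
    | zero => simp [hU0, hU1]
    | succ m ih =>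
      obtain ⟨h1, h2⟩ := ih
      have hrec' : (U (m+2) : ℝ) = A * U (m+1) - B * U m := by
        rw [hrec m]; push_cast; ring
      have hU1pos : (0:ℝ) ≤ (U (m+1) : ℝ) :=
        le_trans (by positivity) h1
      refine ⟨?_, hU1pos⟩
      rw [hrec']
      have h3 : α * (α * (U (m+1) : ℝ)) ≤ α * (A * U (m+1) - B * U m) := by
        nlinarith [hαsq, mul_le_mul_of_nonneg_left h1 hB'.le, hU1pos]
      exact (mul_le_mul_iff_right₀ hαpos).mp h3
  have aux : ∀ n, α ^ n ≤ (U (n+1) : ℝ) := by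
    intro n
    induction n with
    | zero => simp [hU1]
    | succ m ih =>
      calc α ^ (m+1) = α * α ^ m := by ring
        _ ≤ α * (U (m+1) : ℝ) := by nlinarith [hαpos]
        _ ≤ (U (m+2) : ℝ) := (key (m+1)).1
  intro n hn
  obtain ⟨m, rfl⟩ : ∃ m, n = m + 1 := ⟨n-1, by omega⟩
  simpa using aux m
end

section
/- Let A, B be integers with A·B·(A²−4B) ≠ 0 and let α, β be the roots of x² − Ax + B. Then α/β is a root of unity if and only if (A,B) is of the form (r, r²), (2r, 2r²), or (3r, 3r²) for some nonzero integer r. -/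
open Polynomial in
lemma rat_int_of_isIntegral {q : ℚ} (h : IsIntegral ℤ (q : ℂ)) : ∃ n : ℤ, (n : ℚ) = q := by
  have h' : IsIntegral ℤ q := by
    rwa [show ((q:ℂ)) = algebraMap ℚ ℂ q from rfl,
      isIntegral_algebraMap_iff (algebraMap ℚ ℂ).injective] at h
  exact IsIntegrallyClosed.isIntegral_iff.mp h'

theorem degenerate_lucas_classification (A B : ℤ)
    (hABD : A * B * (A ^ 2 - 4 * B) ≠ 0)
    (α β : ℂ) (hα : α ^ 2 - A * α + B = 0) (hβ : β ^ 2 - A * β + B = 0)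
    (hαβ : α ≠ β) :
    (∃ m : ℕ, 0 < m ∧ (α / β) ^ m = 1) ↔
      ∃ r : ℤ, r ≠ 0 ∧
        ((A, B) = (r, r ^ 2) ∨ (A, B) = (2 * r, 2 * r ^ 2) ∨
          (A, B) = (3 * r, 3 * r ^ 2)) := by
  have hA : A ≠ 0 := by rintro rfl; simp at hABD
  have hB : B ≠ 0 := by rintro rfl; simp at hABD
  have hD : A ^ 2 - 4 * B ≠ 0 := by
    intro h; exact hABD (by rw [h, mul_zero])
  have hBc : (B : ℂ) ≠ 0 := Int.cast_ne_zero.mpr hB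
  have hsum : α + β = (A : ℂ) := by
    have h1 : (α - β) * (α + β - A) = 0 := by linear_combination hα - hβ
    rcases mul_eq_zero.mp h1 with h | h
    · exact absurd (sub_eq_zero.mp h) hαβ
    · linear_combination h
  have hprod : α * β = (B : ℂ) := by linear_combination α * hsum - hα
  have hβ0 : β ≠ 0 := by
    rintro rfl; rw [mul_zero] at hprod; exact hBc hprod.symm
  have hα0 : α ≠ 0 := by
    rintro rfl; rw [zero_mul] at hprod; exact hBc hprod.symm
  set ζ := α / β with hζdef
  have hζ0 : ζ ≠ 0 := div_ne_zero hα0 hβ0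
  have hq : (B : ℂ) * ζ ^ 2 - ((A : ℂ) ^ 2 - 2 * B) * ζ + B = 0 := by
    rw [hζdef, div_pow]
    field_simp
    rw [← hsum, ← hprod]
    ring
  constructor
  · rintro ⟨m, hm, hζm⟩
    have habs : ‖ζ‖ = 1 := Complex.norm_eq_one_of_pow_eq_one hζm hm.ne'
    have hint1 : IsIntegral ℤ ζ := by
      refine ⟨Polynomial.X ^ m - Polynomial.C 1, Polynomial.monic_X_pow_sub_C 1 hm.ne', ?_⟩
      simp [hζm]
    have hinv : ζ⁻¹ = ζ ^ (m - 1) := by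
      refine inv_eq_of_mul_eq_one_right ?_
      rw [← pow_succ', Nat.sub_add_cancel hm, hζm]
    have hint2 : IsIntegral ℤ ζ⁻¹ := by rw [hinv]; exact hint1.pow _
    have hintc : IsIntegral ℤ (ζ + ζ⁻¹) := hint1.add hint2
    have hc : ζ + ζ⁻¹ = ((A : ℂ) ^ 2 - 2 * B) / B := by
      field_simp
      linear_combination hq
    set q : ℚ := ((A : ℚ) ^ 2 - 2 * B) / B with hqdef
    have hBq : (B : ℚ) ≠ 0 := Int.cast_ne_zero.mpr hB
    have hcq : ζ + ζ⁻¹ = (q : ℂ) := by rw [hc, hqdef]; push_cast; ring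
    obtain ⟨n, hn⟩ := rat_int_of_isIntegral (hcq ▸ hintc)
    have hnB : A ^ 2 - 2 * B = n * B := by
      have : ((A : ℚ) ^ 2 - 2 * B) = n * B := by
        rw [hn, hqdef]; field_simp
      exact_mod_cast this
    have hbound : |n| ≤ 2 := by
      have h1 : ‖ζ + ζ⁻¹‖ ≤ 2 := by
        calc ‖ζ + ζ⁻¹‖ ≤ ‖ζ‖ + ‖ζ⁻¹‖ := norm_add_le _ _
        _ = 2 := by rw [norm_inv, habs]; norm_num
      have h2 : ((n : ℚ) : ℂ) = ζ + ζ⁻¹ := by rw [hcq, hn]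
      have h3 : ‖((n:ℝ) : ℂ)‖ ≤ 2 := by
        rw [show ((n:ℝ):ℂ) = ((n:ℚ):ℂ) by push_cast; ring, h2]; exact h1
      rw [Complex.norm_real, Real.norm_eq_abs] at h3
      exact_mod_cast h3
    obtain ⟨hl, hr'⟩ := abs_le.mp hbound
    interval_cases n
    · -- n = -2 : A^2 = 0
      exact absurd (by nlinarith [sq_nonneg A] : A = 0) hA
    · -- n = -1 : B = A^2
      exact ⟨A, hA, Or.inl (by rw [show B = A ^ 2 by linarith])⟩
    · -- n = 0 : A^2 = 2B
      have h2 : (2 : ℤ) ∣ A := by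
        refine Int.prime_two.dvd_of_dvd_pow (n := 2) ⟨B, by linarith⟩
      obtain ⟨r, hr⟩ := h2
      subst hr
      have hBr : B = 2 * r ^ 2 := by
        have h4 : 2 * B = 2 * (2 * r ^ 2) := by linear_combination -hnB
        exact mul_left_cancel₀ two_ne_zero h4
      subst hBr
      exact ⟨r, by rintro rfl; simp at hA, Or.inr (Or.inl rfl)⟩
    · -- n = 1 : A^2 = 3B
      have h3 : (3 : ℤ) ∣ A := by
        refine Int.prime_three.dvd_of_dvd_pow (n := 2) ⟨B, by linarith⟩
      obtain ⟨r, hr⟩ := h3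
      subst hr
      have hBr : B = 3 * r ^ 2 := by
        have h4 : 3 * B = 3 * (3 * r ^ 2) := by linear_combination -hnB
        exact mul_left_cancel₀ three_ne_zero h4
      subst hBr
      exact ⟨r, by rintro rfl; simp at hA, Or.inr (Or.inr rfl)⟩
    · -- n = 2 : A^2 = 4B, contradiction
      exact absurd (by linarith : A ^ 2 - 4 * B = 0) hD
  · rintro ⟨r, hr, h | h | h⟩
    all_goals rw [Prod.mk.injEq] at h
    all_goals obtain ⟨hA', hB'⟩ := h
    all_goals rw [hA', hB'] at hq
    · have hrc : ((r : ℂ)) ^ 2 ≠ 0 := pow_ne_zero _ (Int.cast_ne_zero.mpr hr)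
      have h3 : ζ ^ 2 + ζ + 1 = 0 := by
        apply mul_left_cancel₀ hrc
        push_cast at hq ⊢
        linear_combination hq
      exact ⟨3, by norm_num, by linear_combination (ζ - 1) * h3⟩
    · have hrc : ((r : ℂ)) ^ 2 ≠ 0 := pow_ne_zero _ (Int.cast_ne_zero.mpr hr)
      have h3 : ζ ^ 2 + 1 = 0 := by
        apply mul_left_cancel₀ hrc
        push_cast at hq ⊢
        linear_combination (1/2 : ℂ) * hq
      exact ⟨4, by norm_num, by linear_combination (ζ ^ 2 - 1) * h3⟩
    · have hrc : ((r : ℂ)) ^ 2 ≠ 0 := pow_ne_zero _ (Int.cast_ne_zero.mpr hr)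
      have h3 : ζ ^ 2 - ζ + 1 = 0 := by
        apply mul_left_cancel₀ hrc
        push_cast at hq ⊢
        linear_combination (1/3 : ℂ) * hq
      exact ⟨6, by norm_num, by linear_combination (ζ + 1) * (ζ ^ 3 - 1) * h3⟩
end

section
/- Let t be a real number with t ≥ 2. Then the number of pairs of integers (A, B) with A·B·(A²−4B) ≠ 0 such that the characteristic roots α, β of x² − Ax + B (ordered so |α| ≥ |β|) satisfy |α| ≤ t is at most 4t³ − t² + 7t. -/
lemma root_bounds (t : ℝ) (ht : 2 ≤ t) (A B : ℤ)
    (hD : A ^ 2 - 4 * B ≠ 0)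
    (hroots : ∀ z : ℂ, z ^ 2 - A * z + B = 0 → ‖z‖ ≤ t) :
    |(A : ℝ)| ≤ 2 * t ∧ (B : ℝ) ≤ t ^ 2 ∧ |(A : ℝ)| * t - t ^ 2 ≤ (B : ℝ) := by
  have ht0 : (0:ℝ) < t := by linarith
  rcases lt_or_gt_of_ne hD with hDneg | hDpos
  · -- complex roots case: A^2 < 4B
    have hpos : (0:ℝ) < 4 * B - (A:ℝ) ^ 2 := by
      have : (0:ℤ) < 4 * B - A ^ 2 := by omega
      exact_mod_cast this
    set c : ℝ := Real.sqrt (4 * (B:ℝ) - (A:ℝ) ^ 2) with hcdef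
    have hc : c ^ 2 = 4 * (B:ℝ) - (A:ℝ) ^ 2 := Real.sq_sqrt hpos.le
    set α : ℂ := ((A:ℝ)/2 : ℝ) + ((c/2 : ℝ) : ℂ) * Complex.I with hαdef
    have hcC : ((c:ℝ) : ℂ) ^ 2 = 4 * (B:ℂ) - (A:ℂ) ^ 2 := by
      have := congrArg (fun x : ℝ => (x : ℂ)) hc
      push_cast at this ⊢
      exact this
    have hroot : α ^ 2 - (A:ℂ) * α + (B:ℂ) = 0 := by
      rw [hαdef]
      push_cast
      linear_combination (((c:ℂ)/2) ^ 2) * Complex.I_sq - hcC / 4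
    have hat : ‖α‖ ≤ t := hroots α hroot
    have hsq : (‖α‖) ^ 2 = (B:ℝ) := by
      rw [Complex.sq_norm, hαdef, Complex.normSq_add_mul_I]
      nlinarith [hc]
    have hre : α.re = (A:ℝ)/2 := by simp [hαdef]
    have haA : |(A:ℝ)| ≤ 2 * ‖α‖ := by
      have := Complex.abs_re_le_norm α
      rw [hre, abs_div] at this
      simp at this
      linarith [this]
    have ha0 : 0 ≤ ‖α‖ := norm_nonneg _
    refine ⟨by linarith, by nlinarith, ?_⟩
    nlinarith [sq_nonneg (‖α‖ - t), mul_le_mul_of_nonneg_right haA ht0.le]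
  · -- real roots case
    have hpos : (0:ℝ) < (A:ℝ) ^ 2 - 4 * B := by
      have : (0:ℤ) < A ^ 2 - 4 * B := by omega
      exact_mod_cast this
    set c : ℝ := Real.sqrt ((A:ℝ) ^ 2 - 4 * B) with hcdef
    have hc : c ^ 2 = (A:ℝ) ^ 2 - 4 * B := Real.sq_sqrt hpos.le
    set r₁ : ℝ := ((A:ℝ) + c)/2 with hr1
    set r₂ : ℝ := ((A:ℝ) - c)/2 with hr2
    have hroot1R : r₁ ^ 2 - (A:ℝ) * r₁ + B = 0 := by
      rw [hr1]; linear_combination hc / 4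
    have hroot2R : r₂ ^ 2 - (A:ℝ) * r₂ + B = 0 := by
      rw [hr2]; linear_combination hc / 4
    have h1 : |r₁| ≤ t := by
      rw [← Real.norm_eq_abs, ← Complex.norm_real]
      apply hroots
      have := congrArg (fun x : ℝ => (x : ℂ)) hroot1R
      push_cast at this ⊢
      exact this
    have h2 : |r₂| ≤ t := by
      rw [← Real.norm_eq_abs, ← Complex.norm_real]
      apply hroots
      have := congrArg (fun x : ℝ => (x : ℂ)) hroot2R
      push_cast at this ⊢
      exact this
    rw [abs_le] at h1 h2
    have hA : (A:ℝ) = r₁ + r₂ := by rw [hr1, hr2]; ring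
    have hB : (B:ℝ) = r₁ * r₂ := by rw [hr1, hr2]; linear_combination hc / 4
    have p1 : 0 ≤ (t - r₁) * (t - r₂) := mul_nonneg (by linarith [h1.2]) (by linarith [h2.2])
    have p2 : 0 ≤ (t + r₁) * (t + r₂) := mul_nonneg (by linarith [h1.1]) (by linarith [h2.1])
    have p3 : 0 ≤ (t - r₁) * (t + r₂) := mul_nonneg (by linarith [h1.2]) (by linarith [h2.1])
    have p4 : 0 ≤ (t + r₁) * (t - r₂) := mul_nonneg (by linarith [h1.1]) (by linarith [h2.2])
    refine ⟨abs_le.2 ⟨by linarith, by linarith⟩, by nlinarith, ?_⟩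
    rcases abs_cases (A:ℝ) with ⟨h, _⟩ | ⟨h, _⟩ <;> rw [h] <;> nlinarith


lemma sum_abs_Icc (n : ℕ) : ∑ A ∈ Finset.Icc (-(n:ℤ)) (n:ℤ), |A| = n * (n + 1) := by
  induction n with
  | zero => simp
  | succ n ih =>
    have h1 : Finset.Icc (-(n+1:ℤ)) ((n:ℤ)+1) =
        insert (-(n+1:ℤ)) (insert ((n:ℤ)+1) (Finset.Icc (-(n:ℤ)) (n:ℤ))) := by
      ext x; simp [Finset.mem_Icc]; omega
    push_cast
    rw [h1, Finset.sum_insert (by simp [Finset.mem_Icc]; try omega),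
      Finset.sum_insert (by simp [Finset.mem_Icc]; try omega), ih]
    have e1 : |(-(n+1:ℤ))| = (n:ℤ)+1 := by rw [abs_neg]; exact abs_of_nonneg (by positivity)
    have e2 : |((n:ℤ)+1)| = (n:ℤ)+1 := abs_of_nonneg (by positivity)
    push_cast [e1, e2]
    ring

theorem count_lucas_bounded_roots_upper (t : ℝ) (ht : 2 ≤ t) :
    {p : ℤ × ℤ | p.1 * p.2 * (p.1 ^ 2 - 4 * p.2) ≠ 0 ∧
      ∀ z : ℂ, z ^ 2 - p.1 * z + p.2 = 0 → ‖z‖ ≤ t}.Finite ∧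
    ({p : ℤ × ℤ | p.1 * p.2 * (p.1 ^ 2 - 4 * p.2) ≠ 0 ∧
      ∀ z : ℂ, z ^ 2 - p.1 * z + p.2 = 0 → ‖z‖ ≤ t}.ncard : ℝ) ≤
      4 * t ^ 3 - t ^ 2 + 7 * t := by
  have ht0 : (0:ℝ) < t := by linarith
  set n : ℕ := ⌊2 * t⌋₊ with hn
  have hn2t : (n:ℝ) ≤ 2 * t := Nat.floor_le (by linarith)
  have hnZ : ((n:ℕ) : ℤ) = ⌊2 * t⌋ := Int.natCast_floor_eq_floor (by linarith)
  set M : ℤ := ⌊t ^ 2⌋ with hM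
  set lb : ℤ → ℤ := fun A => ⌈|(A:ℝ)| * t - t ^ 2⌉ with hlb
  set E : Finset ℤ := (Finset.Icc (-(n:ℤ)) (n:ℤ)).erase 0 with hE
  set F : Finset (ℤ × ℤ) := E.biUnion
      (fun A => (Finset.Icc (lb A) M).map ⟨fun B => (A, B), fun a b h => by simpa using h⟩) with hF
  have hsub : {p : ℤ × ℤ | p.1 * p.2 * (p.1 ^ 2 - 4 * p.2) ≠ 0 ∧
      ∀ z : ℂ, z ^ 2 - p.1 * z + p.2 = 0 → ‖z‖ ≤ t} ⊆ ↑F := by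
    rintro ⟨A, B⟩ ⟨hne, hroots⟩
    have hD : A ^ 2 - 4 * B ≠ 0 := fun h => hne (by rw [h]; ring)
    have hA0 : A ≠ 0 := fun h => hne (by rw [h]; ring)
    obtain ⟨h1, h2, h3⟩ := root_bounds t ht A B hD hroots
    have hAn : A ∈ E := by
      refine Finset.mem_erase.2 ⟨hA0, Finset.mem_Icc.2 ⟨?_, ?_⟩⟩
      · have : -A ≤ ⌊2 * t⌋ := Int.le_floor.2 (by
          push_cast
          calc -(A:ℝ) ≤ |(A:ℝ)| := neg_le_abs _
          _ ≤ 2 * t := h1)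
        omega
      · have : A ≤ ⌊2 * t⌋ := Int.le_floor.2 (le_trans (le_abs_self _) h1)
        omega
    refine Finset.mem_coe.2 (Finset.mem_biUnion.2 ⟨A, hAn, Finset.mem_map.2 ⟨B, ?_, rfl⟩⟩)
    exact Finset.mem_Icc.2 ⟨Int.ceil_le.2 h3, Int.le_floor.2 h2⟩
  refine ⟨Set.Finite.subset F.finite_toSet hsub, ?_⟩
  have hnc : ({p : ℤ × ℤ | p.1 * p.2 * (p.1 ^ 2 - 4 * p.2) ≠ 0 ∧
      ∀ z : ℂ, z ^ 2 - p.1 * z + p.2 = 0 → ‖z‖ ≤ t}.ncard) ≤ F.card := by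
    rw [← Set.ncard_coe_finset F]
    exact Set.ncard_le_ncard hsub F.finite_toSet
  have hcard : (F.card : ℝ) ≤ ∑ A ∈ E, (2 * t ^ 2 + 1 - |(A:ℝ)| * t) := by
    have h0 : F.card ≤ ∑ A ∈ E, ((Finset.Icc (lb A) M).map
        ⟨fun B => (A, B), fun a b h => by simpa using h⟩).card := Finset.card_biUnion_le
    simp only [Finset.card_map] at h0
    calc (F.card : ℝ) ≤ ((∑ A ∈ E, (Finset.Icc (lb A) M).card : ℕ) : ℝ) := by exact_mod_cast h0
      _ = ∑ A ∈ E, ((Finset.Icc (lb A) M).card : ℝ) := by push_cast; ring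
      _ ≤ ∑ A ∈ E, (2 * t ^ 2 + 1 - |(A:ℝ)| * t) := by
          apply Finset.sum_le_sum
          intro A hA
          have hAn : |(A:ℝ)| ≤ (n:ℝ) := by
            have := Finset.mem_Icc.1 (Finset.mem_of_mem_erase hA)
            rw [abs_le]
            exact ⟨by exact_mod_cast this.1, by exact_mod_cast this.2⟩
          have hrhs : (0:ℝ) ≤ 2 * t ^ 2 + 1 - |(A:ℝ)| * t := by nlinarith
          rw [Int.card_Icc]
          rcases le_or_gt (M + 1 - lb A) 0 with h | h
          · rw [Int.toNat_of_nonpos h]; simpa using hrhs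
          · have heq : ((M + 1 - lb A).toNat : ℝ) = ((M:ℝ) + 1 - lb A) := by
              have := Int.toNat_of_nonneg h.le
              exact_mod_cast congrArg (fun z : ℤ => (z : ℝ)) this
            rw [heq]
            have hMle : (M:ℝ) ≤ t ^ 2 := Int.floor_le _
            have hlbge : |(A:ℝ)| * t - t ^ 2 ≤ (lb A : ℝ) := Int.le_ceil _
            linarith
  have hsum : ∑ A ∈ E, (2 * t ^ 2 + 1 - |(A:ℝ)| * t)
      = 2 * n * (2 * t ^ 2 + 1) - t * (n * (n + 1)) := by
    rw [Finset.sum_sub_distrib, Finset.sum_const]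
    have hcardE : E.card = 2 * n := by
      rw [hE, Finset.card_erase_of_mem (by simp), Int.card_Icc]
      omega
    have habs : ∑ A ∈ E, |(A:ℝ)| * t = t * (n * (n + 1)) := by
      have : ∑ A ∈ E, |(A:ℝ)| * t = (∑ A ∈ E, |(A:ℝ)|) * t := by rw [Finset.sum_mul]
      rw [this]
      have h2 : ∑ A ∈ E, |(A:ℝ)| = ((∑ A ∈ E, |A| : ℤ) : ℝ) := by
        push_cast; rfl
      have h3 : (∑ A ∈ E, |A| : ℤ) = ∑ A ∈ Finset.Icc (-(n:ℤ)) (n:ℤ), |A| :=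
        Finset.sum_erase _ (by simp)
      rw [h2, h3, sum_abs_Icc]
      push_cast; ring
    rw [habs, hcardE]
    ring
  have hfin : 2 * (n:ℝ) * (2 * t ^ 2 + 1) - t * (n * (n + 1)) ≤ 4 * t ^ 3 - t ^ 2 + 7 * t := by
    have hn0 : (0:ℝ) ≤ n := Nat.cast_nonneg n
    nlinarith [sq_nonneg (2 * t * (n:ℝ) - (4 * t ^ 2 - t + 2)), sq_nonneg (t - 2), mul_pos ht0 ht0]
  calc ({p : ℤ × ℤ | p.1 * p.2 * (p.1 ^ 2 - 4 * p.2) ≠ 0 ∧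
      ∀ z : ℂ, z ^ 2 - p.1 * z + p.2 = 0 → ‖z‖ ≤ t}.ncard : ℝ)
      ≤ (F.card : ℝ) := by exact_mod_cast hnc
    _ ≤ ∑ A ∈ E, (2 * t ^ 2 + 1 - |(A:ℝ)| * t) := hcard
    _ = 2 * n * (2 * t ^ 2 + 1) - t * (n * (n + 1)) := hsum
    _ ≤ 4 * t ^ 3 - t ^ 2 + 7 * t := hfin
end

section
/- Let t be a real number with t ≥ 2. Then the number of pairs of integers (A, B) giving a non-degenerate Lucas sequence (i.e., A·B·(A²−4B) ≠ 0 and α/β is not a root of unity) whose dominant root satisfies |α| ≤ t is at least 4t³ − 10t² − 29t. -/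
open Polynomial in
lemma no_root_of_unity (a b : ℤ) (h0 : a ≠ 0) (hd : a ^ 2 ≠ 4 * b)
    (e1 : a ^ 2 ≠ b) (e2 : a ^ 2 ≠ 2 * b) (e3 : a ^ 2 ≠ 3 * b) :
    ¬∃ (α β : ℂ) (m : ℕ), α ≠ β ∧ α ^ 2 - a * α + b = 0 ∧
      β ^ 2 - a * β + b = 0 ∧ 0 < m ∧ (α / β) ^ m = 1 := by
  rintro ⟨α, β, m, hne, hα, hβ, hm, hpow⟩
  have hβ0 : β ≠ 0 := by
    rintro rfl
    rw [div_zero, zero_pow hm.ne'] at hpow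
    exact one_ne_zero hpow.symm
  have hα0 : α ≠ 0 := by
    rintro rfl
    rw [zero_div, zero_pow hm.ne'] at hpow
    exact one_ne_zero hpow.symm
  set ζ : ℂ := α / β with hζdef
  -- Vieta
  have hfac : (α - β) * (α + β - a) = 0 := by linear_combination hα - hβ
  have hsum : α + β = (a : ℂ) := by
    rcases mul_eq_zero.mp hfac with h | h
    · exact absurd (sub_eq_zero.mp h) hne
    · linear_combination h
  have hprod : α * β = (b : ℂ) := by
    have hc : β = (a : ℂ) - α := by linear_combination hsum
    rw [hc]; linear_combination -hα
  have hb0 : ((b : ℤ) : ℂ) ≠ 0 := by rw [← hprod]; exact mul_ne_zero hα0 hβ0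
  -- ζ integral, ζ⁻¹ integral
  have hζint : IsIntegral ℤ ζ :=
    ⟨X ^ m - C 1, monic_X_pow_sub_C _ hm.ne', by simp [hpow]⟩
  have hζinv : IsIntegral ℤ ζ⁻¹ :=
    ⟨X ^ m - C 1, monic_X_pow_sub_C _ hm.ne', by simp [inv_pow, hpow]⟩
  have hsint : IsIntegral ℤ (ζ + ζ⁻¹) := hζint.add hζinv
  -- value of s
  have hs : ζ + ζ⁻¹ = ((a ^ 2 - 2 * b : ℤ) : ℂ) / ((b : ℤ) : ℂ) := by
    rw [hζdef, inv_div, div_add_div α β hβ0 hα0]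
    rw [show α * α + β * β = ((a ^ 2 - 2 * b : ℤ) : ℂ) by
      push_cast; linear_combination (α + β + (a : ℂ)) * hsum - 2 * hprod]
    rw [show β * α = ((b : ℤ) : ℂ) by rw [mul_comm]; exact hprod]
  -- rationality: get integer k with k * b = a^2 - 2*b
  have hq : algebraMap ℚ ℂ ((a ^ 2 - 2 * b : ℤ) / (b : ℚ)) = ζ + ζ⁻¹ := by
    rw [hs, eq_ratCast]
    push_cast
    ring
  have hqint : IsIntegral ℤ (((a ^ 2 - 2 * b : ℤ) : ℚ) / (b : ℚ)) := by
    rw [← isIntegral_algebraMap_iff (algebraMap ℚ ℂ).injective, hq]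
    exact hsint
  obtain ⟨k, hk⟩ := IsIntegrallyClosed.isIntegral_iff.mp hqint
  have hbq : ((b : ℤ) : ℚ) ≠ 0 := by exact_mod_cast fun h => hb0 (by exact_mod_cast h)
  rw [eq_intCast, eq_div_iff hbq] at hk
  have hkb : a ^ 2 - 2 * b = k * b := by exact_mod_cast hk.symm
  -- |ζ| = 1
  have habs : ‖ζ‖ = 1 := by
    have h1 : (‖ζ‖) ^ m = 1 := by rw [← norm_pow, hpow, norm_one]
    rcases lt_trichotomy (‖ζ‖) 1 with h | h | h
    · exact absurd h1 (by nlinarith [pow_lt_one₀ (norm_nonneg ζ) h hm.ne'])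
    · exact h
    · exact absurd h1 (by nlinarith [one_lt_pow₀ h hm.ne'])
  -- |k| ≤ 2
  have hζk : ζ + ζ⁻¹ = (k : ℂ) := by
    rw [hs, show ((a^2 - 2*b : ℤ) : ℂ) = (k : ℂ) * ((b:ℤ):ℂ) by exact_mod_cast congrArg (Int.cast : ℤ → ℂ) hkb]
    exact mul_div_cancel_right₀ _ hb0
  have hk2 : |(k : ℝ)| ≤ 2 := by
    have : ‖((k : ℤ) : ℂ)‖ ≤ 2 := by
      rw [← hζk]
      calc ‖ζ + ζ⁻¹‖ ≤ ‖ζ‖ + ‖ζ⁻¹‖ := norm_add_le _ _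
        _ = 2 := by rw [norm_inv, habs]; norm_num
    rwa [Complex.norm_intCast] at this
  have hkl : -2 ≤ k := by exact_mod_cast neg_le_of_abs_le hk2
  have hku : k ≤ 2 := by exact_mod_cast le_of_abs_le hk2
  -- case analysis
  interval_cases k
  · exact h0 (by nlinarith [sq_nonneg a] : a = 0)
  · exact e1 (by linarith)
  · exact e2 (by linarith)
  · exact e3 (by linarith)
  · exact hd (by linarith)


lemma roots_bound (t : ℝ) (ht : 2 ≤ t) (a b : ℤ) (hd : a ^ 2 ≠ 4 * b)
    (h2 : (b : ℝ) ≤ t ^ 2) (h3 : (|a| : ℝ) ≤ 2 * t)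
    (h4 : (|a| : ℝ) * t - t ^ 2 ≤ (b : ℝ)) :
    ∀ z : ℂ, z ^ 2 - a * z + b = 0 → ‖z‖ ≤ t := by
  intro z hz
  have ht0 : (0:ℝ) ≤ t := by linarith
  rcases lt_or_gt_of_ne hd with hlt | hgt
  · -- complex case : a^2 < 4b
    have hltR : ((a:ℝ)) ^ 2 < 4 * (b:ℝ) := by exact_mod_cast hlt
    have hconj : ((starRingEnd ℂ) z) ^ 2 - a * ((starRingEnd ℂ) z) + b = 0 := by
      have := congrArg (starRingEnd ℂ) hz
      simpa using this
    by_cases him : z.im = 0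
    · exfalso
      have hre : z = (z.re : ℂ) := Complex.ext rfl (by simp [him])
      have hx : (z.re : ℝ) ^ 2 - a * z.re + b = 0 := by
        have := hz
        rw [hre] at this
        exact_mod_cast this
      nlinarith [sq_nonneg (2 * z.re - (a:ℝ))]
    · have hne : (starRingEnd ℂ) z ≠ z := by
        intro h
        apply him
        have := congrArg Complex.im h
        simp [Complex.conj_im] at this
        linarith
      have hfac : (z - (starRingEnd ℂ) z) * (z + (starRingEnd ℂ) z - a) = 0 := by
        linear_combination hz - hconj
      have hsum : z + (starRingEnd ℂ) z = (a : ℂ) := by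
        rcases mul_eq_zero.mp hfac with h | h
        · exact absurd (sub_eq_zero.mp h).symm hne
        · linear_combination h
      have hprod : z * (starRingEnd ℂ) z = (b : ℂ) := by
        have hc : (starRingEnd ℂ) z = (a : ℂ) - z := by linear_combination hsum
        rw [hc]; linear_combination -hz
      have hnsq : Complex.normSq z = (b : ℝ) := by
        have := Complex.mul_conj z
        rw [hprod] at this
        exact_mod_cast this.symm
      rw [Complex.norm_def, hnsq]
      calc Real.sqrt (b : ℝ) ≤ Real.sqrt (t ^ 2) := Real.sqrt_le_sqrt h2
        _ = t := Real.sqrt_sq ht0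
  · -- real case : a^2 > 4b
    set d : ℤ := a ^ 2 - 4 * b with hddef
    have hw : (2 * z - (a:ℂ)) ^ 2 = (d : ℂ) := by
      rw [hddef]
      push_cast
      linear_combination 4 * hz
    set w : ℂ := 2 * z - (a:ℂ) with hwdef
    have hdnn : (0:ℝ) ≤ ((d : ℤ) : ℝ) := by
      have : (0:ℤ) ≤ d := by omega
      exact_mod_cast this
    rw [sq, Complex.ext_iff] at hw
    obtain ⟨hwre, hwim⟩ := hw
    simp [Complex.mul_re, Complex.mul_im, Complex.intCast_re, Complex.intCast_im] at hwre hwim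
    have him : w.im = 0 := by
      by_contra him
      have hre0 : w.re = 0 := by
        rcases mul_eq_zero.mp (show w.re * w.im = 0 by linarith) with h | h
        · exact h
        · exact absurd h him
      rw [hre0] at hwre
      have hpos : 0 < w.im * w.im := mul_self_pos.mpr him
      linarith
    have hzim : z.im = 0 := by
      have : w.im = 2 * z.im := by simp [hwdef]
      linarith
    have hzre : w.re = 2 * z.re - (a:ℝ) := by simp [hwdef]
    have hx2 : w.re ^ 2 = ((d : ℤ) : ℝ) := by
      rw [him] at hwre
      nlinarith [hwre]
    have hcast : ((d : ℤ) : ℝ) = ((a:ℝ))^2 - 4 * (b:ℝ) := by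
      rw [hddef]; push_cast; ring
    have hdle : ((d : ℤ) : ℝ) ≤ (2 * t - |(a:ℝ)|) ^ 2 := by
      have hsq : |(a:ℝ)| ^ 2 = ((a:ℝ))^2 := sq_abs _
      nlinarith [h4, hsq, hcast]
    have hwb : -(2*t - |(a:ℝ)|) ≤ w.re ∧ w.re ≤ 2*t - |(a:ℝ)| :=
      abs_le_of_sq_le_sq' (by rw [hx2]; exact hdle) (by linarith)
    have hzr : z = ((z.re : ℝ) : ℂ) := Complex.ext rfl (by simp [hzim])
    rw [hzr, Complex.norm_real, Real.norm_eq_abs, abs_le]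
    constructor <;>
      linarith [le_abs_self (a:ℝ), neg_le_abs (a:ℝ), hwb.1, hwb.2, hzre]



lemma gauss_sum_eval (t : ℝ) : ∀ n : ℕ, ∑ i ∈ Finset.range n, (2*(2*t^2 - ((i:ℝ)+1)*t - 6))
    = 4*(n:ℝ)*t^2 - (n:ℝ)*((n:ℝ)+1)*t - 12*(n:ℝ) := by
  intro n
  induction n with
  | zero => simp
  | succ k ih =>
    rw [Finset.sum_range_succ, ih]
    push_cast
    ring

theorem count_lucas_bounded_roots_lower (t : ℝ) (ht : 2 ≤ t) :
    4 * t ^ 3 - 10 * t ^ 2 - 29 * t ≤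
      (({p : ℤ × ℤ | p.1 * p.2 * (p.1 ^ 2 - 4 * p.2) ≠ 0 ∧
        (¬∃ (α β : ℂ) (m : ℕ), α ≠ β ∧ α ^ 2 - p.1 * α + p.2 = 0 ∧
          β ^ 2 - p.1 * β + p.2 = 0 ∧ 0 < m ∧ (α / β) ^ m = 1) ∧
        ∀ z : ℂ, z ^ 2 - p.1 * z + p.2 = 0 → ‖z‖ ≤ t}.ncard : ℝ)) := by
  classical
  have ht0 : (0:ℝ) ≤ t := by linarith
  set S := {p : ℤ × ℤ | p.1 * p.2 * (p.1 ^ 2 - 4 * p.2) ≠ 0 ∧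
        (¬∃ (α β : ℂ) (m : ℕ), α ≠ β ∧ α ^ 2 - p.1 * α + p.2 = 0 ∧
          β ^ 2 - p.1 * β + p.2 = 0 ∧ 0 < m ∧ (α / β) ^ m = 1) ∧
        ∀ z : ℂ, z ^ 2 - p.1 * z + p.2 = 0 → ‖z‖ ≤ t} with hSdef
  -- finiteness of S
  have hfin : S.Finite := by
    apply Set.Finite.subset (Set.finite_Icc ((-⌈2*t⌉, -⌈t^2⌉) : ℤ × ℤ) (⌈2*t⌉, ⌈t^2⌉))
    rintro ⟨A, B⟩ ⟨h1, h2, h3⟩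
    obtain ⟨w, hw⟩ := IsAlgClosed.exists_pow_nat_eq ((A^2 - 4*B : ℤ) : ℂ) (n := 2) (by norm_num)
    push_cast at hw
    have hα : (((A:ℂ) + w)/2)^2 - (A:ℂ)*(((A:ℂ)+w)/2) + (B:ℂ) = 0 := by
      linear_combination (1/4 : ℂ) * hw
    have hβ : (((A:ℂ) - w)/2)^2 - (A:ℂ)*(((A:ℂ)-w)/2) + (B:ℂ) = 0 := by
      linear_combination (1/4 : ℂ) * hw
    have ha := h3 _ hα
    have hb := h3 _ hβ
    have hA' : |(A:ℝ)| ≤ 2*t := by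
      have heq : ((A:ℂ)) = ((A:ℂ)+w)/2 + ((A:ℂ)-w)/2 := by ring
      have : ‖(A:ℂ)‖ ≤ 2*t := by
        rw [heq]
        calc ‖((A:ℂ)+w)/2 + ((A:ℂ)-w)/2‖
            ≤ ‖((A:ℂ)+w)/2‖ + ‖((A:ℂ)-w)/2‖ := norm_add_le _ _
          _ ≤ t + t := add_le_add ha hb
          _ = 2*t := by ring
      rwa [Complex.norm_intCast] at this
    have hB' : |(B:ℝ)| ≤ t^2 := by
      have heq : ((B:ℂ)) = (((A:ℂ)+w)/2) * (((A:ℂ)-w)/2) := by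
        linear_combination (1/4 : ℂ) * hw
      have : ‖(B:ℂ)‖ ≤ t^2 := by
        rw [heq, norm_mul]
        calc ‖((A:ℂ)+w)/2‖ * ‖((A:ℂ)-w)/2‖
            ≤ t * t := mul_le_mul ha hb (norm_nonneg _) ht0
          _ = t^2 := by ring
      rwa [Complex.norm_intCast] at this
    have c1 : A ≤ ⌈2*t⌉ := by
      have : (A:ℝ) ≤ (⌈2*t⌉ : ℝ) := le_trans (le_abs_self _) (le_trans hA' (Int.le_ceil _))
      exact_mod_cast this
    have c2 : -⌈2*t⌉ ≤ A := by
      have : (-(⌈2*t⌉ : ℤ) : ℝ) ≤ (A:ℝ) := by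
        have := neg_abs_le ((A:ℝ))
        have := Int.le_ceil (2*t)
        linarith
      exact_mod_cast this
    have c3 : B ≤ ⌈t^2⌉ := by
      have : (B:ℝ) ≤ (⌈t^2⌉ : ℝ) := le_trans (le_abs_self _) (le_trans hB' (Int.le_ceil _))
      exact_mod_cast this
    have c4 : -⌈t^2⌉ ≤ B := by
      have : (-(⌈t^2⌉ : ℤ) : ℝ) ≤ (B:ℝ) := by
        have := neg_abs_le ((B:ℝ))
        have := Int.le_ceil (t^2)
        linarith
      exact_mod_cast this
    exact Set.mem_Icc.mpr ⟨⟨c2, c4⟩, ⟨c1, c3⟩⟩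
  -- construction
  set n : ℕ := ⌊2*t⌋₊ with hndef
  have hn_le : (n:ℝ) ≤ 2*t := Nat.floor_le (by linarith)
  have hn_gt : 2*t < (n:ℝ) + 1 := Nat.lt_floor_add_one _
  set M : ℤ := ⌊t^2⌋ with hMdef
  have hM_le : (M:ℝ) ≤ t^2 := Int.floor_le _
  have hM_gt : t^2 - 1 < (M:ℝ) := Int.sub_one_lt_floor _
  set Lo : ℤ → ℤ := fun a => ⌈|(a:ℝ)| * t - t^2⌉ with hLodef
  set bad : ℤ → Finset ℤ := fun a => ({0, a^2, a^2/2, a^2/3, a^2/4} : Finset ℤ) with hbaddef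
  set g : ℤ → Finset (ℤ×ℤ) := fun a => (Finset.Icc (Lo a) M \ bad a).image (fun b => (a,b)) with hgdef
  set f : ℕ × Bool → ℤ := fun p => if p.2 then ((p.1:ℤ)+1) else -((p.1:ℤ)+1) with hfdef
  set idx : Finset (ℕ × Bool) := Finset.range n ×ˢ (Finset.univ : Finset Bool) with hidxdef
  set F : Finset (ℤ×ℤ) := idx.biUnion (fun p => g (f p)) with hFdef
  have hf_ne : ∀ p : ℕ × Bool, f p ≠ 0 := by
    rintro ⟨i, (_|_)⟩ <;> simp [hfdef] <;> omega
  have hf_abs : ∀ p : ℕ × Bool, |f p| = (p.1:ℤ) + 1 := by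
    rintro ⟨i, b⟩
    cases b
    · show |(-((i:ℤ)+1))| = (i:ℤ)+1
      rw [abs_neg, abs_of_nonneg (by positivity)]
    · show |((i:ℤ)+1)| = (i:ℤ)+1
      rw [abs_of_nonneg (by positivity)]
  have hf_inj : Function.Injective f := by
    rintro ⟨i, (_|_)⟩ ⟨j, (_|_)⟩ h <;> simp [hfdef] at h <;> simp <;> omega
  -- first-coordinate of g
  have hg_fst : ∀ a : ℤ, ∀ x ∈ g a, x.1 = a := by
    intro a x hx
    rw [hgdef] at hx
    simp only [Finset.mem_image] at hx
    obtain ⟨b, _, rfl⟩ := hx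
    rfl
  have hdisj : ∀ x ∈ idx, ∀ y ∈ idx, x ≠ y → Disjoint (g (f x)) (g (f y)) := by
    intro x _ y _ hxy
    rw [Finset.disjoint_left]
    intro z hz1 hz2
    have e1 := hg_fst _ _ hz1
    have e2 := hg_fst _ _ hz2
    exact hxy (hf_inj (e1 ▸ e2))
  -- F ⊆ S
  have hsub : ↑F ⊆ S := by
    intro x hx
    rw [hFdef] at hx
    simp only [Finset.coe_biUnion, Set.mem_iUnion, Finset.mem_coe] at hx
    obtain ⟨p, hp, hxg⟩ := hx
    rw [hgdef] at hxg
    simp only [Finset.mem_image, Finset.mem_sdiff, Finset.mem_Icc] at hxg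
    obtain ⟨b, ⟨⟨hbl, hbu⟩, hbbad⟩, rfl⟩ := hxg
    set a := f p with hadef
    have ha0 : a ≠ 0 := hf_ne p
    have hb0 : b ≠ 0 := by
      intro h
      exact hbbad (by rw [hbaddef, h]; simp)
    have hd : a ^ 2 ≠ 4 * b := by
      intro h
      apply hbbad
      have : a^2 / 4 = b := by omega
      rw [hbaddef, ← this]
      simp
    have e1 : a ^ 2 ≠ b := by
      intro h
      apply hbbad
      rw [hbaddef, ← h]
      simp
    have e2 : a ^ 2 ≠ 2 * b := by
      intro h
      apply hbbad
      have : a^2 / 2 = b := by omega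
      rw [hbaddef, ← this]
      simp
    have e3 : a ^ 2 ≠ 3 * b := by
      intro h
      apply hbbad
      have : a^2 / 3 = b := by omega
      rw [hbaddef, ← this]
      simp
    -- real bounds
    have hidx : p.1 < n := by
      rw [hidxdef] at hp
      exact (Finset.mem_range.mp (Finset.mem_product.mp hp).1)
    have habs : |(a:ℝ)| = (p.1:ℝ) + 1 := by
      have := hf_abs p
      rw [← hadef] at this
      rw [show |(a:ℝ)| = ((|a| : ℤ) : ℝ) by push_cast [Int.cast_abs]; ring, this]
      push_cast
      ring
    have h3' : |(a:ℝ)| ≤ 2*t := by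
      rw [habs]
      have : (p.1:ℝ) + 1 ≤ (n:ℝ) := by exact_mod_cast hidx
      linarith
    have h2' : (b:ℝ) ≤ t^2 := by
      have : (b:ℝ) ≤ (M:ℝ) := by exact_mod_cast hbu
      linarith
    have h4' : |(a:ℝ)| * t - t^2 ≤ (b:ℝ) := by
      have h5 : (|(a:ℝ)| * t - t^2) ≤ ((Lo a : ℤ) : ℝ) := by
        rw [hLodef]
        exact Int.le_ceil _
      have h6 : ((Lo a : ℤ) : ℝ) ≤ (b:ℝ) := by exact_mod_cast hbl
      linarith
    rw [hSdef]
    refine ⟨?_, no_root_of_unity a b ha0 hd e1 e2 e3, roots_bound t ht a b hd h2' h3' h4'⟩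
    have : a^2 - 4*b ≠ 0 := by
      intro h
      exact hd (by omega)
    exact mul_ne_zero (mul_ne_zero ha0 hb0) this
  -- per-fiber cardinality lower bound
  have key : ∀ a : ℤ, 2*t^2 - |(a:ℝ)| * t - 6 ≤ ((g a).card : ℝ) := by
    intro a
    have hcard_g : (g a).card = (Finset.Icc (Lo a) M \ bad a).card := by
      rw [hgdef]; exact Finset.card_image_of_injective _ (Prod.mk_right_injective a)
    have h1 : (Finset.Icc (Lo a) M).card ≤ (Finset.Icc (Lo a) M \ bad a).card + (bad a).card :=
      Finset.card_le_card_sdiff_add_card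
    have hins : ∀ (x : ℤ) (s : Finset ℤ) (k : ℕ), s.card ≤ k → (insert x s).card ≤ k+1 :=
      fun x s k h => le_trans (Finset.card_insert_le _ _) (Nat.add_le_add_right h 1)
    have h2 : (bad a).card ≤ 5 := by
      rw [hbaddef]
      exact hins _ _ 4 (hins _ _ 3 (hins _ _ 2 (hins _ _ 1 (le_of_eq (Finset.card_singleton _)))))
    have h3 : (Finset.Icc (Lo a) M).card = (M + 1 - Lo a).toNat := Int.card_Icc _ _
    have h4 : ((M + 1 - Lo a : ℤ) : ℝ) ≤ ((M + 1 - Lo a).toNat : ℝ) := by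
      exact_mod_cast Int.self_le_toNat _
    have h5 : ((Lo a : ℤ) : ℝ) < |(a:ℝ)| * t - t^2 + 1 := by
      rw [hLodef]; exact Int.ceil_lt_add_one _
    have h6 : ((Finset.Icc (Lo a) M).card : ℝ) ≤ ((Finset.Icc (Lo a) M \ bad a).card : ℝ) + 5 := by
      have := le_trans h1 (Nat.add_le_add_left h2 _)
      exact_mod_cast this
    have h7 : ((M:ℝ) + 1 - ((Lo a : ℤ):ℝ)) ≤ ((Finset.Icc (Lo a) M).card : ℝ) := by
      rw [h3]
      refine le_trans (le_of_eq ?_) h4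
      push_cast
      ring
    rw [hcard_g]
    linarith [hM_gt, h5, h6, h7]
  -- total cardinality
  have hFcard : 4*(n:ℝ)*t^2 - (n:ℝ)*((n:ℝ)+1)*t - 12*(n:ℝ) ≤ (F.card : ℝ) := by
    rw [hFdef, Finset.card_biUnion hdisj]
    push_cast
    have step1 : ∑ p ∈ idx, (2*(2*t^2 - ((p.1:ℝ)+1)*t - 6))/2 ≤ ∑ p ∈ idx, ((g (f p)).card : ℝ) := by
      apply Finset.sum_le_sum
      intro p hp
      have hk := key (f p)
      have habs2 : |((f p : ℤ):ℝ)| = (p.1:ℝ)+1 := by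
        rw [show |((f p : ℤ):ℝ)| = ((|f p| : ℤ) : ℝ) by push_cast [Int.cast_abs]; ring, hf_abs p]
        push_cast
        ring
      rw [habs2] at hk
      linarith
    refine le_trans ?_ step1
    have step2 : ∑ p ∈ idx, (2*(2*t^2 - ((p.1:ℝ)+1)*t - 6))/2
        = ∑ i ∈ Finset.range n, (2*(2*t^2 - ((i:ℝ)+1)*t - 6)) := by
      rw [hidxdef, Finset.sum_product]
      apply Finset.sum_congr rfl
      intro i _
      simp [Finset.sum_const, Finset.card_univ]
      ring
    rw [step2, gauss_sum_eval t n]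
  -- conclude
  have hle := Set.ncard_le_ncard hsub hfin
  rw [Set.ncard_coe_finset] at hle
  have hle' : (F.card : ℝ) ≤ (S.ncard : ℝ) := by exact_mod_cast hle
  have hP : (0:ℝ) ≤ (2*t - (n:ℝ)) * ((n:ℝ) - (2*t - 1)) :=
    mul_nonneg (by linarith) (by linarith)
  have hnl : 4*t^3 - 10*t^2 - 29*t ≤ 4*(n:ℝ)*t^2 - (n:ℝ)*((n:ℝ)+1)*t - 12*(n:ℝ) := by
    nlinarith [hP, mul_nonneg ht0 hP, hn_le, hn_gt, ht0]
  linarith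
end

section
/- For every even integer n ≥ 6, one has ∏_{k=1}^{(n−2)/2} cos(kπ/n) ≥ 2^{(n−2)/2} · ((n−2)/2)! / n^{(n−2)/2} > 2^{−n+2}. -/
open Real Finset

lemma aux_fact (m : ℕ) (hm : 1 ≤ m) :
    ((m : ℝ) + 1) ^ m < 4 ^ m * m.factorial := by
  induction m, hm using Nat.le_induction with
  | base => norm_num
  | succ m hm ih =>
    have hpos : (0:ℝ) < (m:ℝ) + 1 := by positivity
    have key : ((m : ℝ) + 2) ^ (m+1) < 4 * ((m:ℝ)+1) ^ (m+1) := by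
      have h1 : ((m:ℝ) + 2) = ((m:ℝ)+1) * (1 + 1/((m:ℝ)+1)) := by
        field_simp; ring
      have h2 : (1 + 1/((m:ℝ)+1)) ^ (m+1) ≤ Real.exp 1 := by
        have := Real.add_one_le_exp (1/((m:ℝ)+1))
        calc (1 + 1/((m:ℝ)+1)) ^ (m+1) ≤ (Real.exp (1/((m:ℝ)+1))) ^ (m+1) := by
              apply pow_le_pow_left₀ (by positivity) (by linarith)
          _ = Real.exp (((m+1 : ℕ) : ℝ) * (1/((m:ℝ)+1))) := (Real.exp_nat_mul _ _).symm
          _ = Real.exp 1 := by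
              push_cast
              rw [mul_one_div, div_self (by positivity)]
      have h3 : Real.exp 1 < 4 := by
        have := Real.exp_one_lt_d9; linarith
      calc ((m : ℝ) + 2) ^ (m+1) = ((m:ℝ)+1)^(m+1) * (1 + 1/((m:ℝ)+1)) ^ (m+1) := by
            rw [h1, mul_pow]
        _ ≤ ((m:ℝ)+1)^(m+1) * Real.exp 1 := by
            apply mul_le_mul_of_nonneg_left h2 (by positivity)
        _ < 4 * ((m:ℝ)+1)^(m+1) := by
            have : (0:ℝ) < ((m:ℝ)+1)^(m+1) := by positivity
            nlinarith
    have : 4 * ((m:ℝ)+1) ^ (m+1) ≤ 4 * ((m:ℝ)+1) * (4 ^ m * m.factorial) := by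
      rw [pow_succ] -- (m+1)^(m+1) = (m+1)^m * (m+1)
      nlinarith [ih, hpos]
    push_cast [Nat.factorial_succ]
    calc ((m:ℝ) + 1 + 1) ^ (m+1) = ((m:ℝ)+2)^(m+1) := by ring_nf
      _ < 4 * ((m:ℝ)+1) ^ (m+1) := key
      _ ≤ 4 * ((m:ℝ)+1) * (4 ^ m * m.factorial) := this
      _ = 4 ^ (m+1) * (((m:ℝ)+1) * m.factorial) := by ring

theorem cos_prod_lower_even (n : ℕ) (heven : Even n) (hn : 6 ≤ n) :
    (2 : ℝ) ^ ((n - 2) / 2) * (Nat.factorial ((n - 2) / 2) : ℝ) / (n : ℝ) ^ ((n - 2) / 2) ≤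
      ∏ k ∈ Finset.Icc 1 ((n - 2) / 2), Real.cos (k * Real.pi / n) ∧
    (2 : ℝ) ^ (-(n : ℤ) + 2) <
      (2 : ℝ) ^ ((n - 2) / 2) * (Nat.factorial ((n - 2) / 2) : ℝ) / (n : ℝ) ^ ((n - 2) / 2) := by
  obtain ⟨j, hj⟩ := heven
  set m : ℕ := (n - 2) / 2 with hm
  have hne : n = 2 * m + 2 := by omega
  have hm2 : 2 ≤ m := by omega
  have hnpos : (0:ℝ) < n := by positivity
  have hnn : (n:ℝ) = 2 * m + 2 := by exact_mod_cast congrArg (Nat.cast : ℕ → ℝ) hne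
  -- the nat product identity
  have hfact : ∏ k ∈ Finset.Icc 1 m, (m + 1 - k) = m.factorial := by
    rw [← Finset.prod_Ico_id_eq_factorial m, Finset.Ico_add_one_right_eq_Icc]
    apply Finset.prod_nbij' (fun k => m + 1 - k) (fun k => m + 1 - k)
    · intro a ha; simp only [Finset.mem_Icc] at *; omega
    · intro a ha; simp only [Finset.mem_Icc] at *; omega
    · intro a ha; simp only [Finset.mem_Icc] at *; omega
    · intro a ha; simp only [Finset.mem_Icc] at *; omega
    · intro a ha; rfl
  -- the real product identity
  have hprod : ∏ k ∈ Finset.Icc 1 m, (1 - 2 * (k:ℝ) / n) =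
      (2:ℝ) ^ m * m.factorial / (n:ℝ) ^ m := by
    have : ∀ k ∈ Finset.Icc 1 m, (1 - 2 * (k:ℝ) / n) = 2 * ((m + 1 - k : ℕ) : ℝ) / n := by
      intro k hk
      simp only [Finset.mem_Icc] at hk
      have : ((m + 1 - k : ℕ) : ℝ) = (m:ℝ) + 1 - k := by
        push_cast [Nat.cast_sub (by omega : k ≤ m + 1)]; ring
      rw [this]
      field_simp
      rw [hnn]; ring
    rw [Finset.prod_congr rfl this]
    rw [Finset.prod_div_distrib, Finset.prod_const, Finset.prod_mul_distrib,
      Finset.prod_const, ← Nat.cast_prod, hfact]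
    simp [Nat.card_Icc]
  constructor
  · rw [← hprod]
    apply Finset.prod_le_prod
    · intro k hk
      simp only [Finset.mem_Icc] at hk
      have : 2 * (k:ℝ) ≤ 2 * m := by exact_mod_cast by omega
      rw [sub_nonneg, div_le_one hnpos]
      rw [hnn]; linarith
    · intro k hk
      simp only [Finset.mem_Icc] at hk
      have hk1 : (1:ℝ) ≤ k := by exact_mod_cast hk.1
      have hkm : (k:ℝ) ≤ m := by exact_mod_cast hk.2
      have hx0 : 0 ≤ (k:ℝ) * π / n := by positivity
      have hx1 : (k:ℝ) * π / n ≤ π / 2 := by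
        rw [div_le_div_iff₀ hnpos two_pos]
        have : (k:ℝ) * 2 ≤ (n:ℝ) := by rw [hnn]; linarith
        nlinarith [Real.pi_pos]
      have := Real.one_sub_mul_le_cos hx0 hx1
      have heq : 2 / π * ((k:ℝ) * π / n) = 2 * (k:ℝ) / n := by
        field_simp
      rw [heq] at this
      linarith
  · have h1 : (2:ℝ) ^ (-(n:ℤ) + 2) = ((4:ℝ) ^ m)⁻¹ := by
      rw [hne]
      rw [show (-((2*m+2:ℕ):ℤ) + 2) = -(((2*m : ℕ)):ℤ) from by push_cast; ring, zpow_neg]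
      congr 1
      rw [zpow_natCast, pow_mul]
      norm_num
    have hkey := aux_fact m (by omega)
    have hnm : (n:ℝ) ^ m = 2 ^ m * ((m:ℝ)+1) ^ m := by
      rw [hnn, show (2*(m:ℝ)+2) = 2 * ((m:ℝ)+1) by ring, mul_pow]
    rw [h1, hnm, show (2:ℝ)^m * ↑m.factorial / (2^m*((m:ℝ)+1)^m) = (m.factorial:ℝ)/(((m:ℝ)+1)^m) from by
      rw [mul_div_mul_left _ _ (by positivity)]]
    rw [inv_eq_one_div, div_lt_div_iff₀ (by positivity) (by positivity)]
    nlinarith [hkey]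
end
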